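/- Let X be a discrete metric space with bounded geometry, R > 0 and ε > 0, and let k be a normalised symmetric positive-type kernel on X with finite propagation S and (R,ε)-variation (|1 − k(x,y)| < ε whenever d(x,y) < R). Then for any T ∈ B(ℓ²(X)) whose propagation is at most R' < R (T_{x,y} = 0 if d(x,y) > R'), the Schur multiplier satisfies ‖m_k(T) − T‖ ≤ ε · N · ‖T‖, where N = sup_x #B(x,R'). -/

import Mathlib

open scoped ENNReal
open Metric Set Function

noncomputable section

variable {X : Type*}

/-- The pointwise product of an `ℓ∞` function and an `ℓ²` function is again `ℓ²`. -/
theorem memℓp_two_mul (f : lp (fun _ : X => ℂ) ∞) (ξ : lp (fun _ : X => ℂ) 2) :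
    Memℓp (fun x => f x * ξ x) 2 := by
  apply memℓp_gen
  have h2 : (2 : ℝ≥0∞).toReal = 2 := by norm_num
  rw [h2]
  have hsum : Summable fun x => ‖f‖ ^ (2:ℝ) * ‖ξ x‖ ^ (2:ℝ) :=
    (by simpa [h2] using (lp.memℓp ξ).summable (by rw [h2]; norm_num) :
      Summable fun x => ‖ξ x‖ ^ (2:ℝ)).mul_left _
  refine Summable.of_nonneg_of_le (fun x => by positivity) (fun x => ?_) hsum
  have h1 : ‖f x * ξ x‖ ≤ ‖f‖ * ‖ξ x‖ := by
    rw [norm_mul]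
    exact mul_le_mul_of_nonneg_right (lp.norm_apply_le_norm (by norm_num) f x) (norm_nonneg _)
  calc ‖f x * ξ x‖ ^ (2:ℝ) ≤ (‖f‖ * ‖ξ x‖) ^ (2:ℝ) := by
        gcongr
    _ = ‖f‖ ^ (2:ℝ) * ‖ξ x‖ ^ (2:ℝ) := by
        rw [Real.mul_rpow (norm_nonneg _) (norm_nonneg _)]

/-- Multiplication by a bounded function `f ∈ ℓ∞(X)`, as a bounded operator on `ℓ²(X)`. -/
def mulOp (f : lp (fun _ : X => ℂ) ∞) :
    lp (fun _ : X => ℂ) 2 →L[ℂ] lp (fun _ : X => ℂ) 2 :=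
  LinearMap.mkContinuous
    { toFun := fun ξ => ⟨fun x => f x * ξ x, memℓp_two_mul f ξ⟩
      map_add' := fun ξ η => Subtype.ext <| funext fun x => by
        simp only [lp.coeFn_add, Pi.add_apply, mul_add]
      map_smul' := fun c ξ => Subtype.ext <| funext fun x => by
        simp only [lp.coeFn_smul, Pi.smul_apply, smul_eq_mul, RingHom.id_apply]
        ring }
    ‖f‖ (by
      intro ξ
      refine lp.norm_le_of_forall_sum_le (by norm_num) (by positivity) fun s => ?_
      have hb : ∀ x ∈ s, ‖f x * ξ x‖ ^ ((2:ℝ≥0∞).toReal)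
          ≤ ‖f‖ ^ ((2:ℝ≥0∞).toReal) * ‖ξ x‖ ^ ((2:ℝ≥0∞).toReal) := by
        intro x _
        rw [← Real.mul_rpow (norm_nonneg _) (norm_nonneg _)]
        refine Real.rpow_le_rpow (norm_nonneg _) ?_ (by norm_num)
        rw [norm_mul]
        exact mul_le_mul_of_nonneg_right (lp.norm_apply_le_norm (by norm_num) f x) (norm_nonneg _)
      calc ∑ x ∈ s, ‖f x * ξ x‖ ^ ((2:ℝ≥0∞).toReal)
          ≤ ∑ x ∈ s, ‖f‖ ^ ((2:ℝ≥0∞).toReal) * ‖ξ x‖ ^ ((2:ℝ≥0∞).toReal) :=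
            Finset.sum_le_sum hb
        _ = ‖f‖ ^ ((2:ℝ≥0∞).toReal) * ∑ x ∈ s, ‖ξ x‖ ^ ((2:ℝ≥0∞).toReal) := by
            rw [Finset.mul_sum]
        _ ≤ ‖f‖ ^ ((2:ℝ≥0∞).toReal) * ‖ξ‖ ^ ((2:ℝ≥0∞).toReal) :=
            mul_le_mul_of_nonneg_left (lp.sum_rpow_le_norm_rpow (by norm_num) ξ s)
              (Real.rpow_nonneg (norm_nonneg _) _)
        _ = (‖f‖ * ‖ξ‖) ^ ((2:ℝ≥0∞).toReal) :=
            (Real.mul_rpow (norm_nonneg _) (norm_nonneg _)).symm)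

/-- The standard basis vector `δ_x` of `ℓ²(X)`. -/
def delta [DecidableEq X] (x : X) : lp (fun _ : X => ℂ) 2 := lp.single 2 x (1 : ℂ)

/-- The matrix entry `T_{x,y} = ⟨δ_x, T δ_y⟩` of a bounded operator on `ℓ²(X)`. -/
def entry [DecidableEq X] (T : lp (fun _ : X => ℂ) 2 →L[ℂ] lp (fun _ : X => ℂ) 2)
    (x y : X) : ℂ :=
  inner (𝕜 := ℂ) (delta x) (T (delta y))


lemma inner_delta [DecidableEq X] (x : X) (η : lp (fun _ : X => ℂ) 2) :
    inner (𝕜 := ℂ) (delta x) η = η x := by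
  rw [delta, lp.inner_single_left]
  simp

lemma norm_delta [DecidableEq X] (x : X) : ‖delta (X := X) x‖ = 1 := by
  have := lp.norm_single (p := 2) (E := fun _ : X => ℂ) (by norm_num)
    x (1 : ℂ)
  simpa [delta] using this

def evalCLM (x : X) : lp (fun _ : X => ℂ) 2 →L[ℂ] ℂ :=
  LinearMap.mkContinuous
    { toFun := fun ξ => ξ x
      map_add' := fun ξ η => by simp
      map_smul' := fun c ξ => by simp }
    1 (fun ξ => by
      show ‖(ξ : ∀ _ : X, ℂ) x‖ ≤ 1 * ‖ξ‖
      simpa using lp.norm_apply_le_norm (by norm_num) ξ x)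

lemma evalCLM_apply (x : X) (ξ : lp (fun _ : X => ℂ) 2) : evalCLM x ξ = ξ x := rfl

lemma hasSum_apply_eq [DecidableEq X]
    (A : lp (fun _ : X => ℂ) 2 →L[ℂ] lp (fun _ : X => ℂ) 2)
    (ξ : lp (fun _ : X => ℂ) 2) (x : X) :
    HasSum (fun y => ξ y * (A (delta y) : ∀ _ : X, ℂ) x) ((A ξ : ∀ _ : X, ℂ) x) := by
  have h1 : HasSum (fun y : X => lp.single 2 y (ξ y)) ξ :=
    lp.hasSum_single ENNReal.ofNat_ne_top ξ
  have h2 := h1.mapL ((evalCLM x).comp A)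
  have key : ∀ y : X, ((evalCLM x).comp A) (lp.single 2 y (ξ y))
      = ξ y * (A (delta y) : ∀ _ : X, ℂ) x := by
    intro y
    have : lp.single 2 y (ξ y) = ξ y • delta y := by
      apply lp.ext
      funext j
      by_cases h : j = y
      · subst h; simp [delta, lp.single_apply]
      · simp [delta, lp.single_apply, h]
    rw [this]
    simp [evalCLM_apply]
  simpa [key, evalCLM_apply] using h2

lemma entry_eq_coord [DecidableEq X]
    (A : lp (fun _ : X => ℂ) 2 →L[ℂ] lp (fun _ : X => ℂ) 2) (x y : X) :
    entry A x y = (A (delta y) : ∀ _ : X, ℂ) x := by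
  rw [entry, inner_delta]

lemma eq_zero_of_entries [DecidableEq X]
    (A : lp (fun _ : X => ℂ) 2 →L[ℂ] lp (fun _ : X => ℂ) 2)
    (h : ∀ x y, entry A x y = 0) : A = 0 := by
  ext ξ x
  have h0 : ∀ y : X, (A (delta y) : ∀ _ : X, ℂ) x = 0 := fun y => by
    rw [← entry_eq_coord]; exact h x y
  have hs := hasSum_apply_eq A ξ x
  simp only [h0, mul_zero] at hs
  have := hs.unique hasSum_zero
  simpa using this

lemma schur_bound [DecidableEq X]
    (A : lp (fun _ : X => ℂ) 2 →L[ℂ] lp (fun _ : X => ℂ) 2)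
    (C : ℝ) (hC : 0 ≤ C) (r g : X → Finset X)
    (hrs : ∀ x y, entry A x y ≠ 0 → y ∈ r x)
    (hcs : ∀ x y, entry A x y ≠ 0 → x ∈ g y)
    (hrow : ∀ x, ∑ y ∈ r x, ‖entry A x y‖ ≤ C)
    (hcol : ∀ y, ∑ x ∈ g y, ‖entry A x y‖ ≤ C) :
    ‖A‖ ≤ C := by
  set a : X → X → ℂ := fun x y => entry A x y with ha
  refine A.opNorm_le_bound hC fun ξ => ?_
  refine lp.norm_le_of_forall_sum_le (by norm_num) (by positivity) fun s => ?_
  have h2 : (2 : ℝ≥0∞).toReal = 2 := by norm_num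
  have hcoord : ∀ x : X, (A ξ : ∀ _ : X, ℂ) x = ∑ y ∈ r x, ξ y * a x y := by
    intro x
    refine (hasSum_apply_eq A ξ x).unique ?_
    have hsum : HasSum (fun y => ξ y * a x y) (∑ y ∈ r x, ξ y * a x y) := by
      refine hasSum_sum_of_ne_finset_zero fun y hy => ?_
      have : a x y = 0 := by
        by_contra h; exact hy (hrs x y h)
      simp [this]
    simpa only [ha, entry_eq_coord] using hsum
  have hpt : ∀ x : X, ‖(A ξ : ∀ _ : X, ℂ) x‖ ^ 2
      ≤ C * ∑ y ∈ r x, ‖a x y‖ * ‖ξ y‖ ^ 2 := by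
    intro x
    have h1 : ‖(A ξ : ∀ _ : X, ℂ) x‖ ≤ ∑ y ∈ r x, ‖a x y‖ * ‖ξ y‖ := by
      rw [hcoord x]
      refine (norm_sum_le _ _).trans_eq ?_
      refine Finset.sum_congr rfl fun y _ => ?_
      rw [norm_mul, mul_comm]
    have h1' : ‖(A ξ : ∀ _ : X, ℂ) x‖ ^ 2 ≤ (∑ y ∈ r x, ‖a x y‖ * ‖ξ y‖) ^ 2 := by
      have := norm_nonneg ((A ξ : ∀ _ : X, ℂ) x)
      nlinarith [Finset.sum_nonneg
        (fun y (_ : y ∈ r x) => mul_nonneg (norm_nonneg (a x y)) (norm_nonneg (ξ y)))]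
    refine h1'.trans ?_
    have hcs2 : (∑ y ∈ r x, ‖a x y‖ * ‖ξ y‖) ^ 2
        ≤ (∑ y ∈ r x, ‖a x y‖) * ∑ y ∈ r x, ‖a x y‖ * ‖ξ y‖ ^ 2 :=
      Finset.sum_sq_le_sum_mul_sum_of_sq_eq_mul _
        (fun y _ => norm_nonneg _) (fun y _ => by positivity) (fun y _ => by ring)
    refine hcs2.trans ?_
    exact mul_le_mul_of_nonneg_right (hrow x)
      (Finset.sum_nonneg fun y _ => by positivity)
  classical
  set U := s.biUnion r with hU
  have hstep : ∀ x ∈ s, ∑ y ∈ r x, ‖a x y‖ * ‖ξ y‖ ^ 2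
      = ∑ y ∈ U, ‖a x y‖ * ‖ξ y‖ ^ 2 := by
    intro x hx
    refine Finset.sum_subset (Finset.subset_biUnion_of_mem r hx) fun y _ hy => ?_
    have : a x y = 0 := by
      by_contra h; exact hy (hrs x y h)
    simp [this]
  have hmain : ∑ x ∈ s, ‖(A ξ : ∀ _ : X, ℂ) x‖ ^ 2 ≤ C * (C * ‖ξ‖ ^ 2) := by
    calc ∑ x ∈ s, ‖(A ξ : ∀ _ : X, ℂ) x‖ ^ 2
        ≤ ∑ x ∈ s, C * ∑ y ∈ r x, ‖a x y‖ * ‖ξ y‖ ^ 2 :=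
          Finset.sum_le_sum fun x _ => hpt x
      _ = C * ∑ x ∈ s, ∑ y ∈ U, ‖a x y‖ * ‖ξ y‖ ^ 2 := by
          rw [← Finset.mul_sum]
          congr 1
          exact Finset.sum_congr rfl hstep
      _ = C * ∑ y ∈ U, (∑ x ∈ s, ‖a x y‖) * ‖ξ y‖ ^ 2 := by
          rw [Finset.sum_comm]
          congr 1
          exact Finset.sum_congr rfl fun y _ => by rw [Finset.sum_mul]
      _ ≤ C * ∑ y ∈ U, C * ‖ξ y‖ ^ 2 := by
          refine mul_le_mul_of_nonneg_left (Finset.sum_le_sum fun y _ => ?_) hC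
          refine mul_le_mul_of_nonneg_right ?_ (by positivity)
          calc ∑ x ∈ s, ‖a x y‖ ≤ ∑ x ∈ s ∪ g y, ‖a x y‖ :=
                Finset.sum_le_sum_of_subset_of_nonneg Finset.subset_union_left
                  (fun _ _ _ => norm_nonneg _)
            _ = ∑ x ∈ g y, ‖a x y‖ := by
                refine (Finset.sum_subset Finset.subset_union_right fun x _ hx => ?_).symm
                have : a x y = 0 := by
                  by_contra h; exact hx (hcs x y h)
                simp [this]
            _ ≤ C := hcol y
      _ ≤ C * (C * ‖ξ‖ ^ 2) := by
          rw [← Finset.mul_sum]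
          refine mul_le_mul_of_nonneg_left (mul_le_mul_of_nonneg_left ?_ hC) hC
          have := lp.sum_rpow_le_norm_rpow (p := 2) (by norm_num) ξ U
          simpa [h2, Real.rpow_two] using this
  calc ∑ x ∈ s, ‖(A ξ : ∀ _ : X, ℂ) x‖ ^ (2:ℝ≥0∞).toReal
      = ∑ x ∈ s, ‖(A ξ : ∀ _ : X, ℂ) x‖ ^ 2 := by
        simp [h2, Real.rpow_two]
    _ ≤ C * (C * ‖ξ‖ ^ 2) := hmain
    _ = (C * ‖ξ‖) ^ (2:ℝ≥0∞).toReal := by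
        simp [h2, Real.rpow_two]; ring

/-- the Schur multiplier by a normalised symmetric positive-type kernel of
finite propagation and small variation is close to the identity on operators of small
propagation. -/
theorem schur_multiplier_close_to_identity [MetricSpace X] [DecidableEq X]
    (k : X → X → ℝ) (S R R' ε : ℝ) (N : ℕ)
    (hpos : ∀ (n : ℕ) (x : Fin n → X) (lam : Fin n → ℝ),
      0 ≤ ∑ i, ∑ j, lam i * lam j * k (x i) (x j))
    (hnorm : ∀ x : X, k x x = 1)
    (hsymm : ∀ x y : X, k x y = k y x)
    (hfinprop : ∀ x y : X, S < dist x y → k x y = 0)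
    (hvar : ∀ x y : X, dist x y < R → |1 - k x y| < ε)
    (hR' : R' < R)
    (T : lp (fun _ : X => ℂ) 2 →L[ℂ] lp (fun _ : X => ℂ) 2)
    (hT : ∀ x y : X, R' < dist x y → entry T x y = 0)
    (hN : ∀ x : X, (Metric.closedBall x R').Finite ∧ (Metric.closedBall x R').ncard ≤ N)
    (M : lp (fun _ : X => ℂ) 2 →L[ℂ] lp (fun _ : X => ℂ) 2)
    (hM : ∀ x y : X, entry M x y = k x y * entry T x y) :
    ‖M - T‖ ≤ ε * N * ‖T‖ := by
  have hentry_sub : ∀ x y : X, entry (M - T) x y = ((k x y : ℂ) - 1) * entry T x y := by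
    intro x y
    have : entry (M - T) x y = entry M x y - entry T x y := by
      simp [entry, ContinuousLinearMap.sub_apply, inner_sub_right]
    rw [this, hM x y]; ring
  have hTnorm : ∀ x y : X, ‖entry T x y‖ ≤ ‖T‖ := by
    intro x y
    calc ‖entry T x y‖ ≤ ‖delta (X := X) x‖ * ‖T (delta y)‖ := norm_inner_le_norm _ _
      _ ≤ 1 * (‖T‖ * ‖delta (X := X) y‖) := by
          rw [norm_delta]
          exact mul_le_mul_of_nonneg_left (T.le_opNorm _) zero_le_one
      _ = ‖T‖ := by rw [norm_delta]; ring
  by_cases hT0 : ∀ x y : X, entry T x y = 0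
  · have hTz : T = 0 := eq_zero_of_entries T hT0
    have hMz : M = 0 := eq_zero_of_entries M fun x y => by rw [hM, hT0, mul_zero]
    rw [hTz, hMz, sub_zero, norm_zero, mul_zero]
  · push_neg at hT0
    obtain ⟨x₀, y₀, hxy⟩ := hT0
    have hdist₀ : dist x₀ y₀ ≤ R' := by
      by_contra h
      exact hxy (hT x₀ y₀ (lt_of_not_ge h))
    have hε : 0 < ε := lt_of_le_of_lt (abs_nonneg _)
      (hvar x₀ y₀ (lt_of_le_of_lt hdist₀ hR'))
    have hbound : ∀ x y : X, dist x y ≤ R' → ‖entry (M - T) x y‖ ≤ ε * ‖T‖ := by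
      intro x y hd
      rw [hentry_sub, norm_mul]
      have h1 : ‖(k x y : ℂ) - 1‖ ≤ ε := by
        have : ((k x y : ℂ) - 1) = ((k x y - 1 : ℝ) : ℂ) := by push_cast; ring
        rw [this, Complex.norm_real, Real.norm_eq_abs, abs_sub_comm]
        exact le_of_lt (hvar x y (lt_of_le_of_lt hd hR'))
      exact mul_le_mul h1 (hTnorm x y) (norm_nonneg _) (le_of_lt hε)
    have hsupp : ∀ x y : X, entry (M - T) x y ≠ 0 → dist x y ≤ R' := by
      intro x y h
      by_contra hd
      apply h
      rw [hentry_sub, hT x y (lt_of_not_ge hd), mul_zero]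
    set r : X → Finset X := fun x => (hN x).1.toFinset with hr
    have hmem : ∀ x y : X, y ∈ r x ↔ dist y x ≤ R' := by
      intro x y
      simp [hr, Set.Finite.mem_toFinset, Metric.mem_closedBall]
    have hcard : ∀ x : X, (r x).card ≤ N := by
      intro x
      have := (hN x).2
      rwa [Set.ncard_eq_toFinset_card _ (hN x).1] at this
    have hsum : ∀ (x : X) (t : Finset X), t.card ≤ N →
        (∀ y ∈ t, ‖entry (M - T) x y‖ ≤ ε * ‖T‖) →
        ∑ y ∈ t, ‖entry (M - T) x y‖ ≤ ε * N * ‖T‖ := by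
      intro x t hc hb
      calc ∑ y ∈ t, ‖entry (M - T) x y‖ ≤ t.card • (ε * ‖T‖) :=
            Finset.sum_le_card_nsmul t _ _ hb
        _ = (t.card : ℝ) * (ε * ‖T‖) := by rw [nsmul_eq_mul]
        _ ≤ (N : ℝ) * (ε * ‖T‖) := by
            refine mul_le_mul_of_nonneg_right ?_ (by positivity)
            exact_mod_cast hc
        _ = ε * N * ‖T‖ := by ring
    refine schur_bound (M - T) (ε * N * ‖T‖) (by positivity) r r
      (fun x y h => (hmem x y).2 (by rw [dist_comm]; exact hsupp x y h))
      (fun x y h => (hmem y x).2 (hsupp x y h))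
      (fun x => hsum x (r x) (hcard x) fun y hy => hbound x y
        (by rw [dist_comm]; exact (hmem x y).1 hy))
      (fun y => ?_)
    have : ∀ x ∈ r y, ‖entry (M - T) x y‖ ≤ ε * ‖T‖ := by
      intro x hx
      exact hbound x y ((hmem y x).1 hx)
    -- column sum: sum over x of entries in column y
    calc ∑ x ∈ r y, ‖entry (M - T) x y‖ ≤ (r y).card • (ε * ‖T‖) :=
          Finset.sum_le_card_nsmul _ _ _ this
      _ = ((r y).card : ℝ) * (ε * ‖T‖) := by rw [nsmul_eq_mul]
      _ ≤ (N : ℝ) * (ε * ‖T‖) := by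
          refine mul_le_mul_of_nonneg_right ?_ (by positivity)
          exact_mod_cast hcard y
      _ = ε * N * ‖T‖ := by ring
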